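/- Let f be an odd positive integer, t a positive divisor of f with f − t = 4tm for a nonnegative integer m, and set n = (f−1)/2. Then for each ε ∈ {1, −1}, gcd(2^(f−t) + 1, 2^f + ε·2^(n+1) + 1) = 1. -/

import Mathlib

theorem gcd_add_one_case_4tm (n f t m : ℕ) (hn : 1 ≤ n) (hf : f = 2 * n + 1)
    (htpos : 0 < t) (hdvd : t ∣ f) (hm : f - t = 4 * t * m)
    (ε : ℤ) (hε : ε = 1 ∨ ε = -1) :
    Int.gcd (2 ^ (f - t) + 1) (2 ^ f + ε * 2 ^ (n + 1) + 1) = 1 := by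
  have htf : t ≤ f := Nat.le_of_dvd (by omega) hdvd
  set k := f - t with hk
  have hfk : f = k + t := by omega
  set a : ℤ := 2 ^ k + 1 with ha
  set b : ℤ := 2 ^ f + ε * 2 ^ (n + 1) + 1 with hb
  set D : ℤ := (Int.gcd a b : ℤ) with hD
  have hDa : D ∣ a := Int.gcd_dvd_left a b
  have hDb : D ∣ b := Int.gcd_dvd_right a b
  have hε2 : ε ^ 2 = 1 := by rcases hε with h | h <;> simp [h]
  have hE : (ε * 2 ^ (n + 1)) ^ 2 = 2 * 2 ^ f := by
    rw [mul_pow, hε2, one_mul, ← pow_mul, hf]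
    rw [show (n + 1) * 2 = (2 * n + 1) + 1 by ring, pow_succ]
    ring
  have hb2 : b ∣ 2 ^ (2 * f) + 1 := by
    refine ⟨2 ^ f - ε * 2 ^ (n + 1) + 1, ?_⟩
    rw [hb, two_mul, pow_add]
    linear_combination hE
  have hDb2 : D ∣ 2 ^ (2 * f) + 1 := hDb.trans hb2
  have hD1 : D ∣ 2 ^ (2 * k) - 1 := by
    refine hDa.trans ⟨2 ^ k - 1, ?_⟩
    rw [ha, two_mul, pow_add]; ring
  have hD2 : D ∣ 2 ^ (2 * f) - 2 ^ (2 * t) := by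
    have h : (2:ℤ) ^ (2 * f) - 2 ^ (2 * t) = (2 ^ (2 * k) - 1) * 2 ^ (2 * t) := by
      rw [hfk, show 2 * (k + t) = 2 * k + 2 * t by ring, pow_add]; ring
    rw [h]
    exact hD1.mul_right _
  have hD3 : D ∣ 2 ^ (2 * t) + 1 := by
    have h := dvd_sub hDb2 hD2
    have he : (2:ℤ) ^ (2 * f) + 1 - (2 ^ (2 * f) - 2 ^ (2 * t)) = 2 ^ (2 * t) + 1 := by ring
    rwa [he] at h
  have hD4 : D ∣ 2 ^ (4 * t) - 1 := by
    refine hD3.trans ⟨2 ^ (2 * t) - 1, ?_⟩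
    rw [show 4 * t = 2 * t + 2 * t by ring, pow_add]; ring
  have hD5 : D ∣ 2 ^ k - 1 := by
    refine hD4.trans ?_
    have h : (2:ℤ) ^ k - 1 = ((2:ℤ) ^ (4 * t)) ^ m - 1 ^ m := by
      rw [← pow_mul, one_pow, ← hm]
    rw [h]
    exact sub_dvd_pow_sub_pow _ _ _
  have hD6 : D ∣ 2 := by
    have h := dvd_sub hDa hD5
    have he : a - (2 ^ k - 1) = 2 := by rw [ha]; ring
    rwa [he] at h
  have hg2 : Int.gcd a b ∣ 2 := by
    rw [hD] at hD6
    exact_mod_cast hD6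
  have hbodd : ¬ (2:ℤ) ∣ b := by
    intro h
    have hev : Even b := (even_iff_two_dvd).mpr h
    have h1 : Even ((2:ℤ) ^ f) :=
      (even_two : Even (2:ℤ)).pow_of_ne_zero (by omega)
    have h2 : Even (ε * (2:ℤ) ^ (n + 1)) :=
      ((even_two : Even (2:ℤ)).pow_of_ne_zero (by omega)).mul_left ε
    have hodd : Odd b := by rw [hb]; exact (h1.add h2).add_one
    exact (Int.not_odd_iff_even.mpr hev) hodd
  rcases (Nat.dvd_prime Nat.prime_two).mp hg2 with h1 | h2
  · exact h1
  · exfalso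
    apply hbodd
    have : ((2:ℕ):ℤ) ∣ b := by rw [← h2, ← hD]; exact hDb
    exact_mod_cast this
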